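/- Let F be the free Lie ring over ℤ on a set X, let R be a Lie ideal of F, and let 𝔯 be the two-sided ideal of U(F) generated by ι(R). Then 𝔯 = ϖ(F)·𝔯 + span_ℤ(ι(R)); that is, 𝔯 equals the sum of the product ideal ϖ(F)·𝔯 and the ℤ-submodule of U(F) spanned by the image of R under ι. -/

import Mathlib

open UniversalEnvelopingAlgebra LieModule

attribute [local instance 100] LieRing.ofAssociativeRing

/-- The two-sided ideal (as a ℤ-submodule) of a ring `U` generated by a set `s`. -/
def twoSidedSpan (U : Type*) [Ring U] (s : Set U) : Submodule ℤ U :=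
  ⊤ * Submodule.span ℤ s * ⊤

/-- The augmentation ideal `ϖ(L)` of the universal enveloping algebra of a Lie ring `L`,
i.e. the two-sided ideal of `𝒰(L)` generated by the image of the canonical map `ι : L → 𝒰(L)`. -/
noncomputable def aug (L : Type*) [LieRing L] [LieAlgebra ℤ L] :
    Submodule ℤ (UniversalEnvelopingAlgebra ℤ L) :=
  twoSidedSpan _ (Set.range (ι ℤ : L →ₗ⁅ℤ⁆ UniversalEnvelopingAlgebra ℤ L))

section Aux

variable {L : Type*} [LieRing L] [LieAlgebra ℤ L]

theorem uea_induction {C : UniversalEnvelopingAlgebra ℤ L → Prop}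
    (halg : ∀ r : ℤ, C (algebraMap ℤ _ r))
    (hι : ∀ x : L, C (ι ℤ x))
    (hmul : ∀ a b, C a → C b → C (a * b))
    (hadd : ∀ a b, C a → C b → C (a + b))
    (a : UniversalEnvelopingAlgebra ℤ L) : C a := by
  obtain ⟨a, rfl⟩ : ∃ b, mkAlgHom ℤ L b = a := Quotient.exists_rep a
  induction a using TensorAlgebra.induction with
  | algebraMap r => rw [AlgHom.commutes]; exact halg r
  | ι x => exact hι x
  | mul a b ha hb => rw [map_mul]; exact hmul _ _ ha hb
  | add a b ha hb => rw [map_add]; exact hadd _ _ ha hb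

variable (R : LieIdeal ℤ L)

local notation "U" => UniversalEnvelopingAlgebra ℤ L
local notation "S" => Submodule.span ℤ ((ι ℤ : L →ₗ⁅ℤ⁆ U) '' (R : Set L))

theorem top_mul_stable {N : Submodule ℤ U} (t : U) {x : U}
    (hx : x ∈ (⊤ : Submodule ℤ U) * N) : t * x ∈ (⊤ : Submodule ℤ U) * N := by
  refine Submodule.mul_induction_on hx (fun a _ b hb => ?_) (fun a b ha hb => ?_)
  · rw [← mul_assoc]; exact Submodule.mul_mem_mul trivial hb
  · rw [mul_add]; exact add_mem ha hb

theorem mem_top_mul {N : Submodule ℤ U} {x : U} (hx : x ∈ N) :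
    x ∈ (⊤ : Submodule ℤ U) * N := by
  simpa using Submodule.mul_mem_mul (Submodule.mem_top (x := (1 : U))) hx

theorem span_mul_top_aux (u : U) : ∀ s ∈ S, s * u ∈ (⊤ : Submodule ℤ U) * S := by
  induction u using uea_induction with
  | halg r =>
      intro s hs
      rw [Algebra.algebraMap_eq_smul_one, mul_smul_comm, mul_one]
      exact mem_top_mul (Submodule.smul_mem _ _ hs)
  | hι f =>
      intro s hs
      induction hs using Submodule.span_induction with
      | mem x hx =>
          obtain ⟨r, hr, rfl⟩ := hx
          have hlie : (ι ℤ : L →ₗ⁅ℤ⁆ U) ⁅f, r⁆ = ι ℤ f * ι ℤ r - ι ℤ r * ι ℤ f := by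
            rw [LieHom.map_lie]; rfl
          have key : (ι ℤ : L →ₗ⁅ℤ⁆ U) r * ι ℤ f = ι ℤ f * ι ℤ r - ι ℤ ⁅f, r⁆ := by
            rw [hlie]; abel
          rw [key]
          refine sub_mem (Submodule.mul_mem_mul trivial ?_) (mem_top_mul ?_)
          · exact Submodule.subset_span (Set.mem_image_of_mem _ hr)
          · have hr' : r ∈ R := hr
            have h2 : ⁅f, r⁆ ∈ R := lie_mem_right ℤ L R f r hr'
            exact Submodule.subset_span (Set.mem_image_of_mem _ h2)
      | zero => rw [zero_mul]; exact zero_mem _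
      | add x y _ _ hx hy => rw [add_mul]; exact add_mem hx hy
      | smul c x _ hx => rw [smul_mul_assoc]; exact Submodule.smul_mem _ _ hx
  | hmul a b ha hb =>
      intro s hs
      rw [← mul_assoc]
      refine Submodule.mul_induction_on (ha s hs) (fun t _ s' hs' => ?_)
        (fun x y hx hy => ?_)
      · rw [mul_assoc]
        exact top_mul_stable t (hb s' hs')
      · rw [add_mul]; exact add_mem hx hy
  | hadd a b ha hb =>
      intro s hs
      rw [mul_add]; exact add_mem (ha s hs) (hb s hs)

theorem span_mul_top_le : S * (⊤ : Submodule ℤ U) ≤ (⊤ : Submodule ℤ U) * S :=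
  Submodule.mul_le.mpr fun s hs u _ => span_mul_top_aux R u s hs

theorem top_eq_aug_sup_one :
    (⊤ : Submodule ℤ U) = aug L ⊔ Submodule.span ℤ {(1 : U)} := by
  refine le_antisymm ?_ le_top
  have haug_top : aug L * (⊤ : Submodule ℤ U) ≤ aug L := by
    show twoSidedSpan _ _ * ⊤ ≤ _
    rw [twoSidedSpan, mul_assoc]
    exact mul_le_mul_right le_top _
  have htop_aug : (⊤ : Submodule ℤ U) * aug L ≤ aug L := by
    show ⊤ * twoSidedSpan _ _ ≤ _
    rw [twoSidedSpan, ← mul_assoc, ← mul_assoc]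
    exact mul_le_mul_left (mul_le_mul_left le_top _) _
  have hone : Submodule.span ℤ {(1:U)} * Submodule.span ℤ {(1:U)}
      ≤ Submodule.span ℤ {(1:U)} := by
    rw [Submodule.mul_le]
    intro a ha b hb
    obtain ⟨m, rfl⟩ := Submodule.mem_span_singleton.mp ha
    obtain ⟨n, rfl⟩ := Submodule.mem_span_singleton.mp hb
    rw [smul_mul_smul_comm, one_mul]
    exact Submodule.smul_mem _ _ (Submodule.mem_span_singleton_self 1)
  have key : (aug L ⊔ Submodule.span ℤ {(1:U)}) * (aug L ⊔ Submodule.span ℤ {(1:U)})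
      ≤ aug L ⊔ Submodule.span ℤ {(1:U)} := by
    rw [Submodule.mul_sup, Submodule.sup_mul, Submodule.sup_mul]
    refine sup_le (sup_le ?_ ?_) (sup_le ?_ ?_)
    · exact le_sup_left.trans' ((mul_le_mul_right le_top _).trans haug_top)
    · exact le_sup_left.trans' ((mul_le_mul_left le_top _).trans htop_aug)
    · exact le_sup_left.trans' ((mul_le_mul_right le_top _).trans haug_top)
    · exact le_sup_right.trans' hone
  intro u _
  induction u using uea_induction with
  | halg r =>
      rw [Algebra.algebraMap_eq_smul_one]
      exact Submodule.mem_sup_right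
        (Submodule.smul_mem _ _ (Submodule.mem_span_singleton_self 1))
  | hι x =>
      refine Submodule.mem_sup_left ?_
      have h : (ι ℤ : L →ₗ⁅ℤ⁆ U) x ∈ Submodule.span ℤ (Set.range (ι ℤ : L →ₗ⁅ℤ⁆ U)) :=
        Submodule.subset_span ⟨x, rfl⟩
      show _ ∈ twoSidedSpan _ _
      rw [twoSidedSpan]
      simpa using Submodule.mul_mem_mul
        (Submodule.mul_mem_mul (Submodule.mem_top (x := (1:U))) h)
        (Submodule.mem_top (x := (1:U)))
  | hmul a b ha hb =>
      exact key (Submodule.mul_mem_mul (ha trivial) (hb trivial))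
  | hadd a b ha hb => exact add_mem (ha trivial) (hb trivial)

end Aux

/-- Let `F` be the free Lie ring over ℤ on a set `X`, `R` a Lie ideal of `F`, and `𝔯` the
two-sided ideal of `𝒰(F)` generated by `ι(R)`.  Then `𝔯 = ϖ(F)·𝔯 + span_ℤ(ι(R))`. -/
theorem rId_eq_aug_mul_sup_span (X : Type*) (R : LieIdeal ℤ (FreeLieAlgebra ℤ X)) :
    twoSidedSpan _ ((ι ℤ : FreeLieAlgebra ℤ X →ₗ⁅ℤ⁆ _) '' (R : Set (FreeLieAlgebra ℤ X)))
      = aug (FreeLieAlgebra ℤ X)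
          * twoSidedSpan _ ((ι ℤ : FreeLieAlgebra ℤ X →ₗ⁅ℤ⁆ _) '' (R : Set (FreeLieAlgebra ℤ X)))
        ⊔ Submodule.span ℤ
            ((ι ℤ : FreeLieAlgebra ℤ X →ₗ⁅ℤ⁆ _) '' (R : Set (FreeLieAlgebra ℤ X))) := by
  set F := FreeLieAlgebra ℤ X
  set S := Submodule.span ℤ
    ((ι ℤ : F →ₗ⁅ℤ⁆ UniversalEnvelopingAlgebra ℤ F) '' (R : Set F)) with hS
  set U := UniversalEnvelopingAlgebra ℤ F
  have hr : twoSidedSpan U ((ι ℤ : F →ₗ⁅ℤ⁆ _) '' (R : Set F)) = ⊤ * S * ⊤ := rfl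
  rw [hr]
  have hS_le : S ≤ ⊤ * S * ⊤ := by
    intro x hx
    simpa using Submodule.mul_mem_mul
      (Submodule.mul_mem_mul (Submodule.mem_top (x := (1:U))) hx)
      (Submodule.mem_top (x := (1:U)))
  refine le_antisymm ?_ (sup_le ?_ hS_le)
  · -- ⊤ * S * ⊤ ≤ aug F * (⊤*S*⊤) ⊔ S
    have step1 : (⊤ : Submodule ℤ U) * S ≤ aug F * (⊤ * S * ⊤) ⊔ S := by
      have heq : (⊤ : Submodule ℤ U) * S
          = (aug F ⊔ Submodule.span ℤ {(1:U)}) * S := by rw [← top_eq_aug_sup_one]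
      conv_lhs => rw [heq]
      rw [Submodule.sup_mul]
      refine sup_le ?_ ?_
      · exact le_sup_left.trans' (mul_le_mul_right hS_le _)
      · refine le_sup_right.trans' ?_
        rw [Submodule.mul_le]
        intro m hm s hs
        obtain ⟨n, rfl⟩ := Submodule.mem_span_singleton.mp hm
        rw [smul_mul_assoc, one_mul]
        exact Submodule.smul_mem _ _ hs
    calc (⊤ : Submodule ℤ U) * S * ⊤ = ⊤ * (S * ⊤) := by rw [mul_assoc]
      _ ≤ ⊤ * (⊤ * S) := mul_le_mul_right (span_mul_top_le R) _
      _ = ⊤ * ⊤ * S := by rw [mul_assoc]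
      _ ≤ ⊤ * S := mul_le_mul_left le_top _
      _ ≤ _ := step1
  · -- aug F * (⊤*S*⊤) ≤ ⊤*S*⊤
    calc aug F * (⊤ * S * ⊤) ≤ ⊤ * (⊤ * S * ⊤) := mul_le_mul_left le_top _
      _ = ⊤ * ⊤ * S * ⊤ := by rw [← mul_assoc, ← mul_assoc]
      _ ≤ ⊤ * S * ⊤ := mul_le_mul_left (mul_le_mul_left le_top _) _
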